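/- Let 𝕜 be a commutative ring, G a finite group, and n ≥ 1. For a G-partition (P,g) of type (l;k), let F(P,g) : V^{⊗k} → V^{⊗l} be the 𝕜-linear map whose matrix entry between basis vectors equals 1 if (i_a = i_b if and only if a, b lie in the same part of P) and (h_a g_a^{−1} = h_b g_b^{−1} for all a, b in the same part of P), and 0 otherwise; F(P,g) depends only on [P,g]. Then the maps F(P,g), as [P,g] ranges over the equivalence classes of G-partitions of type (l;k) whose underlying partition has at most n parts, form a basis of the 𝕜-module Hom_{𝕜[G_n]}(V^{⊗k}, V^{⊗l}). In particular, Hom_{𝕜[G_n]}(V^{⊗k}, V^{⊗l}) is spanned by the maps Φ(P,g) over all G-partitions (P,g) of type (l;k). -/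

import Mathlib

/-!
Statement 12: the maps `F(P,g)` (matrix entry `1` iff indices agree *exactly* on the
parts of `P` and the labels match on parts), as `[P,g]` ranges over equivalence classes
of `G`-partitions of type `(l; k)` with at most `n` parts, form a basis of the `𝕜`-module
`Hom_{𝕜[G_n]}(V^{⊗k}, V^{⊗l})`; in particular this Hom-module is spanned by the maps
`Φ(P,g)`.  Equivalence classes are handled via a transversal `F`, and "form a basis" is
expressed as: linearly independent and spanning exactly the submodule of equivariant maps.
-/

namespace GPC

variable (G : Type*) [Group G]

def wreathAut (n : ℕ) : Equiv.Perm (Fin n) →* MulAut (Fin n → G) where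
  toFun π :=
    { toFun := fun g => g ∘ ⇑π⁻¹
      invFun := fun g => g ∘ ⇑π
      left_inv := fun g => by funext i; simp
      right_inv := fun g => by funext i; simp
      map_mul' := fun g h => rfl }
  map_one' := by ext g i; simp
  map_mul' := fun π σ => by ext g i; simp

/-- The wreath product `G_n = Gⁿ ⋊ S_n`. -/
abbrev Wr (n : ℕ) := (Fin n → G) ⋊[wreathAut G n] Equiv.Perm (Fin n)

variable {G}

/-- Equivalence of `G`-partitions with the same underlying partition `P`
(a set partition is encoded as a `Setoid`, whose classes are the parts):
`(P, g) ∼ (P, g')` iff for every part there is `t ∈ G` with `g' = t * g` on that part. -/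
def LabelEquiv {X : Type*} (P : Setoid X) (g g' : X → G) : Prop :=
  ∀ a : X, ∃ t : G, ∀ b : X, P a b → g' b = t * g b

/-- The number of parts of a set partition (encoded as a `Setoid`). -/
noncomputable def numParts {X : Type*} (P : Setoid X) : ℕ := Nat.card (Quotient P)

variable (G) in
/-- The image of the basis vector `g e_i` of `V` under the action of `γ ∈ G_n`:
`(h π) · (g e_i) = h_{π i} g e_{π i}`. -/
def actBasis (n : ℕ) (γ : Wr G n) (p : G × Fin n) : G × Fin n :=
  (γ.left (γ.right p.2) * p.1, γ.right p.2)

variable (𝕜 : Type*) [CommRing 𝕜] (G) (n : ℕ)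

/-- The diagonal action of `γ ∈ G_n` on `V^{⊗k}`, realized on the standard basis
of `V^{⊗k}` given by `k`-tuples of basis vectors of `V`. -/
noncomputable def dAct (k : ℕ) (γ : Wr G n) :
    ((Fin k → G × Fin n) →₀ 𝕜) →ₗ[𝕜] ((Fin k → G × Fin n) →₀ 𝕜) :=
  Finsupp.lmapDomain 𝕜 𝕜 (fun v j => actBasis G n γ (v j))

variable [Fintype G]

open scoped Classical in
/-- The matrix-entry condition defining `Φ(P, g)`: the entry at `(w, v)` is `1`
iff for all `a, b` in the same part of `P` the indices agree and
`h_a g_a⁻¹ = h_b g_b⁻¹`, where `(h, i)` is read off from `v` on the bottom row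
and from `w` on the top row. -/
def phiCond {k l : ℕ} (P : Setoid (Fin k ⊕ Fin l)) (g : Fin k ⊕ Fin l → G)
    (v : Fin k → G × Fin n) (w : Fin l → G × Fin n) : Prop :=
  ∀ a b : Fin k ⊕ Fin l, P a b →
    (Sum.elim v w a).2 = (Sum.elim v w b).2
      ∧ (Sum.elim v w a).1 * (g a)⁻¹ = (Sum.elim v w b).1 * (g b)⁻¹

open scoped Classical in
/-- The map `Φ(P, g) : V^{⊗k} → V^{⊗l}` attached to a `G`-partition `(P, g)` of
type `(l; k)`, defined by its matrix entries on the standard bases. -/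
noncomputable def Phi {k l : ℕ} (P : Setoid (Fin k ⊕ Fin l)) (g : Fin k ⊕ Fin l → G) :
    ((Fin k → G × Fin n) →₀ 𝕜) →ₗ[𝕜] ((Fin l → G × Fin n) →₀ 𝕜) :=
  Finsupp.lift _ 𝕜 _ fun v => ∑ w : Fin l → G × Fin n,
    if phiCond G n P g v w then Finsupp.single w (1 : 𝕜) else 0

open scoped Classical in
/-- The condition defining `F(P, g)`: indices agree *iff* in the same part of `P`,
and labels `h_a g_a⁻¹` agree on parts of `P`. -/
def exactCond {k l : ℕ} (P : Setoid (Fin k ⊕ Fin l)) (g : Fin k ⊕ Fin l → G)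
    (v : Fin k → G × Fin n) (w : Fin l → G × Fin n) : Prop :=
  (∀ a b : Fin k ⊕ Fin l, (Sum.elim v w a).2 = (Sum.elim v w b).2 ↔ P a b)
    ∧ ∀ a b : Fin k ⊕ Fin l, P a b →
        (Sum.elim v w a).1 * (g a)⁻¹ = (Sum.elim v w b).1 * (g b)⁻¹

open scoped Classical in
/-- The map `F(P, g) : V^{⊗k} → V^{⊗l}`. -/
noncomputable def FFun {k l : ℕ} (P : Setoid (Fin k ⊕ Fin l)) (g : Fin k ⊕ Fin l → G) :
    ((Fin k → G × Fin n) →₀ 𝕜) →ₗ[𝕜] ((Fin l → G × Fin n) →₀ 𝕜) :=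
  Finsupp.lift _ 𝕜 _ fun v => ∑ w : Fin l → G × Fin n,
    if exactCond G n P g v w then Finsupp.single w (1 : 𝕜) else 0

/-- The `𝕜`-module `Hom_{𝕜[G_n]}(V^{⊗k}, V^{⊗l})` of homomorphisms of
`𝕜[G_n]`-modules: the `G_n`-equivariant `𝕜`-linear maps. -/
def equivariantHom (k l : ℕ) :
    Submodule 𝕜 (((Fin k → G × Fin n) →₀ 𝕜) →ₗ[𝕜] ((Fin l → G × Fin n) →₀ 𝕜)) where
  carrier := {f | ∀ (γ : Wr G n) (x : (Fin k → G × Fin n) →₀ 𝕜),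
    f (dAct G 𝕜 n k γ x) = dAct G 𝕜 n l γ (f x)}
  add_mem' := by
    intro f g hf hg γ x
    simp [hf γ x, hg γ x]
  zero_mem' := by intro γ x; simp
  smul_mem' := by
    intro c f hf γ x
    simp [hf γ x]

section Aux

open Classical Function

variable {G : Type*} [Group G]

theorem wreathAut_apply {n : ℕ} (π : Equiv.Perm (Fin n)) (h : Fin n → G) (i : Fin n) :
    wreathAut G n π h i = h (π⁻¹ i) := rfl

theorem actBasis_def {n : ℕ} (γ : Wr G n) (p : G × Fin n) :
    actBasis G n γ p = (γ.left (γ.right p.2) * p.1, γ.right p.2) := rfl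

theorem actBasis_one {n : ℕ} (p : G × Fin n) : actBasis G n 1 p = p := by
  simp [actBasis_def]

theorem actBasis_mul {n : ℕ} (γ γ' : Wr G n) (p : G × Fin n) :
    actBasis G n (γ * γ') p = actBasis G n γ (actBasis G n γ' p) := by
  simp [actBasis_def, SemidirectProduct.mul_left, SemidirectProduct.mul_right,
    wreathAut_apply, Pi.mul_apply, mul_assoc]

/-- The permutation of the basis of `V` induced by `γ`. -/
def actPerm {n : ℕ} (γ : Wr G n) : Equiv.Perm (G × Fin n) where
  toFun := actBasis G n γ
  invFun := actBasis G n γ⁻¹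
  left_inv p := by rw [← actBasis_mul, inv_mul_cancel, actBasis_one]
  right_inv p := by rw [← actBasis_mul, mul_inv_cancel, actBasis_one]

theorem tup_injective {n m : ℕ} (γ : Wr G n) :
    Function.Injective (fun (v : Fin m → G × Fin n) j => actBasis G n γ (v j)) :=
  fun v v' h => funext fun j => (actPerm γ).injective (congrFun h j)

/-- The permutation of tuples induced by `γ`. -/
def tupPerm {n m : ℕ} (γ : Wr G n) : Equiv.Perm (Fin m → G × Fin n) :=
  (Equiv.refl (Fin m)).arrowCongr (actPerm γ)

theorem tupPerm_apply {n m : ℕ} (γ : Wr G n) (v : Fin m → G × Fin n) :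
    tupPerm γ v = fun j => actBasis G n γ (v j) := rfl

variable {k l : ℕ}

/-- `exactCond` phrased directly on a function `u : X → G × Fin n`. -/
def econd (n : ℕ) (P : Setoid (Fin k ⊕ Fin l)) (g : Fin k ⊕ Fin l → G)
    (u : Fin k ⊕ Fin l → G × Fin n) : Prop :=
  (∀ a b, (u a).2 = (u b).2 ↔ P a b) ∧
    ∀ a b, P a b → (u a).1 * (g a)⁻¹ = (u b).1 * (g b)⁻¹

/-- `phiCond` phrased directly on a function `u : X → G × Fin n`. -/
def pcond (n : ℕ) (P : Setoid (Fin k ⊕ Fin l)) (g : Fin k ⊕ Fin l → G)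
    (u : Fin k ⊕ Fin l → G × Fin n) : Prop :=
  ∀ a b, P a b → (u a).2 = (u b).2 ∧ (u a).1 * (g a)⁻¹ = (u b).1 * (g b)⁻¹

theorem exactCond_iff {n : ℕ} (P : Setoid (Fin k ⊕ Fin l)) (g : Fin k ⊕ Fin l → G)
    (v : Fin k → G × Fin n) (w : Fin l → G × Fin n) :
    exactCond G n P g v w ↔ econd n P g (Sum.elim v w) := Iff.rfl

theorem phiCond_iff {n : ℕ} (P : Setoid (Fin k ⊕ Fin l)) (g : Fin k ⊕ Fin l → G)
    (v : Fin k → G × Fin n) (w : Fin l → G × Fin n) :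
    phiCond G n P g v w ↔ pcond n P g (Sum.elim v w) := by
  constructor
  · intro h a b hab; exact ⟨(h a b hab).1, (h a b hab).2⟩
  · intro h a b hab; exact ⟨(h a b hab).1, (h a b hab).2⟩

theorem elim_act {n : ℕ} (γ : Wr G n) (v : Fin k → G × Fin n) (w : Fin l → G × Fin n) :
    Sum.elim (fun j => actBasis G n γ (v j)) (fun j => actBasis G n γ (w j))
      = fun a => actBasis G n γ (Sum.elim v w a) :=
  funext fun a => by cases a <;> rfl

theorem econd_act_mpr {n : ℕ} {P : Setoid (Fin k ⊕ Fin l)} {g : Fin k ⊕ Fin l → G}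
    {u : Fin k ⊕ Fin l → G × Fin n} (γ : Wr G n) (hu : econd n P g u) :
    econd n P g (fun a => actBasis G n γ (u a)) := by
  constructor
  · intro a b
    dsimp only
    rw [actBasis_def, actBasis_def]
    exact (EmbeddingLike.apply_eq_iff_eq γ.right).trans (hu.1 a b)
  · intro a b hab
    have hi : (u a).2 = (u b).2 := (hu.1 a b).mpr hab
    dsimp only
    rw [actBasis_def, actBasis_def]
    dsimp only
    rw [hi, mul_assoc, mul_assoc, mul_right_inj]
    exact hu.2 a b hab

theorem econd_act {n : ℕ} {P : Setoid (Fin k ⊕ Fin l)} {g : Fin k ⊕ Fin l → G}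
    {u : Fin k ⊕ Fin l → G × Fin n} (γ : Wr G n) :
    econd n P g (fun a => actBasis G n γ (u a)) ↔ econd n P g u := by
  constructor
  · intro h
    have h2 := econd_act_mpr γ⁻¹ h
    have : (fun a => actBasis G n γ⁻¹ (actBasis G n γ (u a))) = u :=
      funext fun a => by rw [← actBasis_mul, inv_mul_cancel, actBasis_one]
    rwa [this] at h2
  · exact econd_act_mpr γ

theorem pcond_act_mpr {n : ℕ} {P : Setoid (Fin k ⊕ Fin l)} {g : Fin k ⊕ Fin l → G}
    {u : Fin k ⊕ Fin l → G × Fin n} (γ : Wr G n) (hu : pcond n P g u) :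
    pcond n P g (fun a => actBasis G n γ (u a)) := by
  intro a b hab
  obtain ⟨hi, hl⟩ := hu a b hab
  refine ⟨?_, ?_⟩
  · dsimp only; rw [actBasis_def, actBasis_def]; dsimp only; rw [hi]
  · dsimp only; rw [actBasis_def, actBasis_def]; dsimp only
    rw [hi, mul_assoc, mul_assoc, mul_right_inj]; exact hl

theorem pcond_act {n : ℕ} {P : Setoid (Fin k ⊕ Fin l)} {g : Fin k ⊕ Fin l → G}
    {u : Fin k ⊕ Fin l → G × Fin n} (γ : Wr G n) :
    pcond n P g (fun a => actBasis G n γ (u a)) ↔ pcond n P g u := by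
  constructor
  · intro h
    have h2 := pcond_act_mpr γ⁻¹ h
    have : (fun a => actBasis G n γ⁻¹ (actBasis G n γ (u a))) = u :=
      funext fun a => by rw [← actBasis_mul, inv_mul_cancel, actBasis_one]
    rwa [this] at h2
  · exact pcond_act_mpr γ

theorem econd_congr {n : ℕ} {P : Setoid (Fin k ⊕ Fin l)} {g h : Fin k ⊕ Fin l → G}
    (hgh : LabelEquiv P g h) (u : Fin k ⊕ Fin l → G × Fin n) :
    econd n P g u ↔ econd n P h u := by
  refine and_congr Iff.rfl (forall_congr' fun a => forall_congr' fun b => imp_congr_right fun hab => ?_)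
  obtain ⟨t, ht⟩ := hgh a
  have ha : h a = t * g a := ht a (P.refl a)
  have hb : h b = t * g b := ht b hab
  rw [ha, hb, mul_inv_rev, mul_inv_rev, ← mul_assoc, ← mul_assoc, mul_left_inj]

theorem econd_unique {n : ℕ} {P P' : Setoid (Fin k ⊕ Fin l)} {g g' : Fin k ⊕ Fin l → G}
    {u : Fin k ⊕ Fin l → G × Fin n} (h1 : econd n P g u) (h2 : econd n P' g' u) :
    P = P' ∧ LabelEquiv P g g' := by
  have hPP : P = P' := Setoid.ext fun a b => (h1.1 a b).symm.trans (h2.1 a b)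
  subst hPP
  refine ⟨rfl, fun a => ⟨((u a).1 * (g' a)⁻¹)⁻¹ * ((u a).1 * (g a)⁻¹), fun b hab => ?_⟩⟩
  have e1 := h1.2 a b hab
  have e2 := h2.2 a b hab
  rw [e1, e2]
  group

/-- The partition of `X` by equal indices. -/
def idxSetoid {n : ℕ} (u : Fin k ⊕ Fin l → G × Fin n) : Setoid (Fin k ⊕ Fin l) :=
  ⟨fun a b => (u a).2 = (u b).2, ⟨fun _ => rfl, Eq.symm, Eq.trans⟩⟩

theorem econd_idx {n : ℕ} (u : Fin k ⊕ Fin l → G × Fin n) :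
    econd n (idxSetoid u) (fun a => (u a).1) u :=
  ⟨fun _ _ => Iff.rfl, fun a b _ => by simp⟩

theorem numParts_idx {n : ℕ} (u : Fin k ⊕ Fin l → G × Fin n) :
    numParts (idxSetoid u) ≤ n := by
  have hinj : Function.Injective
      (Quotient.lift (fun a => (u a).2) (fun a b h => h) : Quotient (idxSetoid u) → Fin n) := by
    intro x y
    refine Quotient.inductionOn₂ x y fun a b h => Quotient.sound ?_
    exact h
  calc numParts (idxSetoid u) ≤ Nat.card (Fin n) := Nat.card_le_card_of_injective _ hinj
    _ = n := by simp

theorem exists_econd {n : ℕ} {P : Setoid (Fin k ⊕ Fin l)} (hP : numParts P ≤ n)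
    (g : Fin k ⊕ Fin l → G) : ∃ u : Fin k ⊕ Fin l → G × Fin n, econd n P g u := by
  haveI : Fintype (Quotient P) := Fintype.ofFinite _
  have hcard : Fintype.card (Quotient P) ≤ Fintype.card (Fin n) := by
    rw [Fintype.card_fin, ← Nat.card_eq_fintype_card]
    exact hP
  obtain ⟨ρ⟩ := Function.Embedding.nonempty_of_card_le hcard
  refine ⟨fun a => (g a, ρ (Quotient.mk P a)), ⟨fun a b => ?_, fun a b hab => by simp⟩⟩
  constructor
  · intro h
    exact Quotient.exact (ρ.injective h)
  · intro h
    exact congrArg ρ (Quotient.sound h)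

theorem exists_perm_comp {α β : Type*} [Fintype α] [Fintype β] (f f' : α → β)
    (hf : Function.Injective f) (hf' : Function.Injective f') :
    ∃ π : Equiv.Perm β, ∀ x, π (f x) = f' x := by
  have hc : Fintype.card ↥(Set.range f)ᶜ = Fintype.card ↥(Set.range f')ᶜ := by
    rw [Fintype.card_compl_set, Fintype.card_compl_set,
      Set.card_range_of_injective hf, Set.card_range_of_injective hf']
  obtain ⟨ec⟩ := Fintype.card_eq.mp hc
  refine ⟨(Equiv.Set.sumCompl (Set.range f)).symm.trans
    ((Equiv.sumCongr ((Equiv.ofInjective f hf).symm.trans (Equiv.ofInjective f' hf')) ec).trans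
      (Equiv.Set.sumCompl (Set.range f'))), fun x => ?_⟩
  have h1 : (Equiv.Set.sumCompl (Set.range f)).symm (f x)
      = Sum.inl ⟨f x, Set.mem_range_self x⟩ :=
    Equiv.Set.sumCompl_symm_apply_of_mem (Set.mem_range_self x)
  rw [Equiv.trans_apply, Equiv.trans_apply, h1, Equiv.sumCongr_apply, Sum.map_inl,
    Equiv.Set.sumCompl_apply_inl, Equiv.trans_apply]
  have h2 : (Equiv.ofInjective f hf).symm ⟨f x, Set.mem_range_self x⟩ = x := by
    apply hf
    have := Equiv.apply_ofInjective_symm hf (⟨f x, Set.mem_range_self x⟩ : Set.range f)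
    rw [this]
  rw [h2, Equiv.ofInjective_apply]

theorem exists_act {n : ℕ} {P : Setoid (Fin k ⊕ Fin l)} {g : Fin k ⊕ Fin l → G}
    {u u' : Fin k ⊕ Fin l → G × Fin n} (h1 : econd n P g u) (h2 : econd n P g u') :
    ∃ γ : Wr G n, ∀ a, actBasis G n γ (u a) = u' a := by
  haveI : Fintype (Quotient P) := Fintype.ofFinite _
  let f : Quotient P → Fin n :=
    Quotient.lift (fun a => (u a).2) (fun a b hab => (h1.1 a b).mpr hab)
  let f' : Quotient P → Fin n :=
    Quotient.lift (fun a => (u' a).2) (fun a b hab => (h2.1 a b).mpr hab)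
  have hfi : Function.Injective f := fun x y =>
    Quotient.inductionOn₂ x y fun a b hab => Quotient.sound ((h1.1 a b).mp hab)
  have hfi' : Function.Injective f' := fun x y =>
    Quotient.inductionOn₂ x y fun a b hab => Quotient.sound ((h2.1 a b).mp hab)
  obtain ⟨π, hπ⟩ := exists_perm_comp f f' hfi hfi'
  let h : Fin n → G := fun i =>
    if hx : ∃ a, (u' a).2 = i then (u' hx.choose).1 * ((u hx.choose).1)⁻¹ else 1
  refine ⟨⟨h, π⟩, fun a => ?_⟩
  have hπa : π (u a).2 = (u' a).2 := hπ (Quotient.mk P a)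
  have hcoef : h ((u' a).2) = (u' a).1 * ((u a).1)⁻¹ := by
    have hex : ∃ c, (u' c).2 = (u' a).2 := ⟨a, rfl⟩
    have hceq : (u' hex.choose).2 = (u' a).2 := hex.choose_spec
    have hPca : P hex.choose a := (h2.1 _ a).mp hceq
    have e1 := h1.2 _ a hPca
    have e2 := h2.2 _ a hPca
    have hc1 : (u' hex.choose).1 = ((u' a).1 * (g a)⁻¹) * g hex.choose := by
      rw [← e2]; group
    have hc2 : (u hex.choose).1 = ((u a).1 * (g a)⁻¹) * g hex.choose := by
      rw [← e1]; group
    show (if hx : ∃ c, (u' c).2 = (u' a).2 then (u' hx.choose).1 * ((u hx.choose).1)⁻¹ else 1)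
      = (u' a).1 * ((u a).1)⁻¹
    rw [dif_pos hex, hc1, hc2]
    group
  have hL : (⟨h, π⟩ : Wr G n).left = h := rfl
  have hR : (⟨h, π⟩ : Wr G n).right = π := rfl
  rw [actBasis_def, hL, hR]
  refine Prod.ext ?_ ?_
  · show h (π (u a).2) * (u a).1 = (u' a).1
    rw [hπa, hcoef]
    group
  · exact hπa

theorem numParts_lt {X : Type*} [Finite X] {P Q : Setoid X}
    (hPQ : ∀ a b, P a b → Q a b) (hne : P ≠ Q) : numParts Q < numParts P := by
  haveI : Fintype X := Fintype.ofFinite _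
  haveI : Fintype (Quotient P) := Fintype.ofFinite _
  haveI : Fintype (Quotient Q) := Fintype.ofFinite _
  let m : Quotient P → Quotient Q :=
    Quotient.lift (Quotient.mk Q) (fun a b hab => Quotient.sound (hPQ a b hab))
  have hsurj : Function.Surjective m := fun y =>
    Quotient.inductionOn y fun b => ⟨Quotient.mk P b, rfl⟩
  have hni : ¬ Function.Injective m := by
    intro hi
    apply hne
    refine Setoid.ext fun a b => ⟨fun h => hPQ a b h, fun h => ?_⟩
    have : Quotient.mk P a = Quotient.mk P b := hi (Quotient.sound h)
    exact Quotient.exact this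
  have := Fintype.card_lt_of_surjective_not_injective m hsurj hni
  simpa [numParts, Nat.card_eq_fintype_card] using this

/-- Compatibility of a coarser labelled partition with `(P, g)`. -/
def compat (P : Setoid (Fin k ⊕ Fin l)) (g : Fin k ⊕ Fin l → G)
    (Q : Setoid (Fin k ⊕ Fin l)) (g' : Fin k ⊕ Fin l → G) : Prop :=
  (∀ a b, P a b → Q a b) ∧ ∀ a b, P a b → g' a * (g a)⁻¹ = g' b * (g b)⁻¹

theorem compat_self (P : Setoid (Fin k ⊕ Fin l)) (g : Fin k ⊕ Fin l → G) :
    compat P g P g :=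
  ⟨fun _ _ h => h, fun a b _ => by simp⟩

theorem labelEquiv_of_compat {P Q : Setoid (Fin k ⊕ Fin l)} {g g' : Fin k ⊕ Fin l → G}
    (hc : compat P g Q g') : LabelEquiv P g g' := fun a =>
  ⟨g' a * (g a)⁻¹, fun b hab => by rw [hc.2 a b hab]; group⟩

theorem pcond_of_compat {n : ℕ} {P Q : Setoid (Fin k ⊕ Fin l)} {g g' : Fin k ⊕ Fin l → G}
    {u : Fin k ⊕ Fin l → G × Fin n} (hc : compat P g Q g') (he : econd n Q g' u) :
    pcond n P g u := by
  intro a b hab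
  have hQ := hc.1 a b hab
  refine ⟨(he.1 a b).mpr hQ, ?_⟩
  calc (u a).1 * (g a)⁻¹ = ((u a).1 * (g' a)⁻¹) * (g' a * (g a)⁻¹) := by group
    _ = ((u b).1 * (g' b)⁻¹) * (g' b * (g b)⁻¹) := by rw [he.2 a b hQ, hc.2 a b hab]
    _ = (u b).1 * (g b)⁻¹ := by group

theorem compat_of_pcond {n : ℕ} {P Q : Setoid (Fin k ⊕ Fin l)} {g g' : Fin k ⊕ Fin l → G}
    {u : Fin k ⊕ Fin l → G × Fin n} (hu : pcond n P g u) (he : econd n Q g' u) :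
    compat P g Q g' := by
  constructor
  · intro a b hab; exact (he.1 a b).mp (hu a b hab).1
  · intro a b hab
    have hQ := (he.1 a b).mp (hu a b hab).1
    calc g' a * (g a)⁻¹ = ((u a).1 * (g' a)⁻¹)⁻¹ * ((u a).1 * (g a)⁻¹) := by group
      _ = ((u b).1 * (g' b)⁻¹)⁻¹ * ((u b).1 * (g b)⁻¹) := by rw [he.2 a b hQ, (hu a b hab).2]
      _ = g' b * (g b)⁻¹ := by group

end Aux

section Aux2

open Classical

variable {𝕜 : Type*} [CommRing 𝕜] {G : Type*} [Group G] [Fintype G] {n k l : ℕ}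

/-- A linear map `V^{⊗k} → V^{⊗l}` specified by its matrix entries. -/
noncomputable def ofEnt (n : ℕ) (e : (Fin k → G × Fin n) → (Fin l → G × Fin n) → 𝕜) :
    ((Fin k → G × Fin n) →₀ 𝕜) →ₗ[𝕜] ((Fin l → G × Fin n) →₀ 𝕜) :=
  Finsupp.lift _ 𝕜 _ fun v => ∑ w, Finsupp.single w (e v w)

theorem ofEnt_single (e : (Fin k → G × Fin n) → (Fin l → G × Fin n) → 𝕜)
    (v : Fin k → G × Fin n) :
    ofEnt n e (Finsupp.single v 1) = ∑ w, Finsupp.single w (e v w) := by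
  rw [ofEnt, Finsupp.lift_apply, Finsupp.sum_single_index (by simp), one_smul]

theorem ofEnt_apply (e : (Fin k → G × Fin n) → (Fin l → G × Fin n) → 𝕜)
    (v : Fin k → G × Fin n) (w : Fin l → G × Fin n) :
    ofEnt n e (Finsupp.single v 1) w = e v w := by
  rw [ofEnt_single]
  simp [Finsupp.finset_sum_apply, Finsupp.single_apply]

theorem FFun_eq (P : Setoid (Fin k ⊕ Fin l)) (g : Fin k ⊕ Fin l → G) :
    FFun G 𝕜 n P g = ofEnt n (fun v w => if exactCond G n P g v w then (1 : 𝕜) else 0) := by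
  unfold FFun ofEnt
  congr 1
  funext v
  refine Finset.sum_congr rfl fun w _ => ?_
  split_ifs with h <;> simp [h]

theorem Phi_eq (P : Setoid (Fin k ⊕ Fin l)) (g : Fin k ⊕ Fin l → G) :
    Phi G 𝕜 n P g = ofEnt n (fun v w => if phiCond G n P g v w then (1 : 𝕜) else 0) := by
  unfold Phi ofEnt
  congr 1
  funext v
  refine Finset.sum_congr rfl fun w _ => ?_
  split_ifs with h <;> simp [h]

theorem FFun_apply (P : Setoid (Fin k ⊕ Fin l)) (g : Fin k ⊕ Fin l → G)
    (v : Fin k → G × Fin n) (w : Fin l → G × Fin n) :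
    FFun G 𝕜 n P g (Finsupp.single v 1) w
      = if econd n P g (Sum.elim v w) then (1 : 𝕜) else 0 := by
  rw [FFun_eq, ofEnt_apply]
  exact if_congr (exactCond_iff P g v w) rfl rfl

theorem Phi_apply (P : Setoid (Fin k ⊕ Fin l)) (g : Fin k ⊕ Fin l → G)
    (v : Fin k → G × Fin n) (w : Fin l → G × Fin n) :
    Phi G 𝕜 n P g (Finsupp.single v 1) w
      = if pcond n P g (Sum.elim v w) then (1 : 𝕜) else 0 := by
  rw [Phi_eq, ofEnt_apply]
  exact if_congr (phiCond_iff P g v w) rfl rfl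

theorem entry_ext {f g : ((Fin k → G × Fin n) →₀ 𝕜) →ₗ[𝕜] ((Fin l → G × Fin n) →₀ 𝕜)}
    (h : ∀ v w, f (Finsupp.single v 1) w = g (Finsupp.single v 1) w) : f = g := by
  apply Finsupp.lhom_ext
  intro v b
  have hb : Finsupp.single v b = b • Finsupp.single v (1 : 𝕜) := by
    rw [Finsupp.smul_single, smul_eq_mul, mul_one]
  rw [hb, map_smul, map_smul]
  congr 1
  exact Finsupp.ext fun w => h v w

theorem dAct_single (m : ℕ) (γ : Wr G n) (v : Fin m → G × Fin n) (c : 𝕜) :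
    dAct G 𝕜 n m γ (Finsupp.single v c)
      = Finsupp.single (fun j => actBasis G n γ (v j)) c := by
  rw [dAct, Finsupp.lmapDomain_apply, Finsupp.mapDomain_single]

theorem dAct_apply (m : ℕ) (γ : Wr G n) (x : (Fin m → G × Fin n) →₀ 𝕜)
    (w : Fin m → G × Fin n) :
    dAct G 𝕜 n m γ x (fun j => actBasis G n γ (w j)) = x w := by
  rw [dAct, Finsupp.lmapDomain_apply]
  exact Finsupp.mapDomain_apply (tup_injective γ) x w

theorem mem_equivariantHom {f : ((Fin k → G × Fin n) →₀ 𝕜) →ₗ[𝕜] ((Fin l → G × Fin n) →₀ 𝕜)} :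
    f ∈ equivariantHom G 𝕜 n k l ↔
      ∀ (γ : Wr G n) (x : (Fin k → G × Fin n) →₀ 𝕜),
        f (dAct G 𝕜 n k γ x) = dAct G 𝕜 n l γ (f x) := Iff.rfl

theorem ofEnt_equivariant (e : (Fin k → G × Fin n) → (Fin l → G × Fin n) → 𝕜)
    (he : ∀ (γ : Wr G n) v w,
      e (fun j => actBasis G n γ (v j)) (fun j => actBasis G n γ (w j)) = e v w) :
    ofEnt n e ∈ equivariantHom G 𝕜 n k l := by
  rw [mem_equivariantHom]
  intro γ x
  induction x using Finsupp.induction_linear with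
  | zero => simp
  | add f g hf hg => rw [map_add, map_add, map_add, hf, hg, map_add]
  | single v b =>
    rw [dAct_single]
    have hb : ∀ (m : ℕ) (v' : Fin m → G × Fin n),
        Finsupp.single v' b = b • Finsupp.single v' (1 : 𝕜) := fun m v' => by
      rw [Finsupp.smul_single, smul_eq_mul, mul_one]
    rw [hb _ v, hb _ (fun j => actBasis G n γ (v j)), map_smul, map_smul, map_smul]
    congr 1
    rw [ofEnt_single, ofEnt_single, map_sum]
    have : ∀ w : Fin l → G × Fin n,
        dAct G 𝕜 n l γ (Finsupp.single w (e v w))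
          = Finsupp.single (fun j => actBasis G n γ (w j)) (e v w) := fun w =>
      dAct_single l γ w (e v w)
    rw [Finset.sum_congr rfl fun w _ => this w]
    rw [← Equiv.sum_comp (tupPerm γ)
      (fun w => Finsupp.single w (e (fun j => actBasis G n γ (v j)) w))]
    refine Finset.sum_congr rfl fun w _ => ?_
    rw [tupPerm_apply, he]

end Aux2

set_option maxHeartbeats 1000000 in
theorem FFun_basis_and_Phi_span (𝕜 : Type*) [CommRing 𝕜]
    (G : Type*) [Group G] [Fintype G] (n : ℕ) (hn : 1 ≤ n) (k l : ℕ)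
    (ι : Type*) (F : ι → Setoid (Fin k ⊕ Fin l) × (Fin k ⊕ Fin l → G))
    -- `F` is a transversal of the equivalence classes with at most `n` parts:
    (hparts : ∀ i, numParts (F i).1 ≤ n)
    (hcover : ∀ (P : Setoid (Fin k ⊕ Fin l)) (g : Fin k ⊕ Fin l → G), numParts P ≤ n →
      ∃ i, (F i).1 = P ∧ LabelEquiv P (F i).2 g)
    (hinj : ∀ i j, (F i).1 = (F j).1 → LabelEquiv (F i).1 (F i).2 (F j).2 → i = j) :
    -- `F(P,g)` depends only on the equivalence class of `(P, g)`
    (∀ (P : Setoid (Fin k ⊕ Fin l)) (g h : Fin k ⊕ Fin l → G),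
      LabelEquiv P g h → FFun G 𝕜 n P g = FFun G 𝕜 n P h)
    -- the `F(P,g)` form a basis of `Hom_{𝕜[G_n]}(V^{⊗k}, V^{⊗l})`
    ∧ LinearIndependent 𝕜 (fun i => FFun G 𝕜 n (F i).1 (F i).2)
    ∧ Submodule.span 𝕜 (Set.range fun i => FFun G 𝕜 n (F i).1 (F i).2)
        = equivariantHom G 𝕜 n k l
    -- in particular, the maps `Φ(P,g)` span `Hom_{𝕜[G_n]}(V^{⊗k}, V^{⊗l})`
    ∧ Submodule.span 𝕜
        {f | ∃ (P : Setoid (Fin k ⊕ Fin l)) (g : Fin k ⊕ Fin l → G), f = Phi G 𝕜 n P g}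
        = equivariantHom G 𝕜 n k l := by
  classical
  -- uniqueness of the transversal index realizing a given `u`
  have huniq : ∀ (i j : ι) (u : Fin k ⊕ Fin l → G × Fin n),
      econd n (F i).1 (F i).2 u → econd n (F j).1 (F j).2 u → i = j := by
    intro i j u hi hj
    obtain ⟨hP, hL⟩ := econd_unique hi hj
    exact hinj i j hP hL
  -- every `u` is realized by some transversal index
  have hcov' : ∀ u : Fin k ⊕ Fin l → G × Fin n, ∃ i, econd n (F i).1 (F i).2 u := by
    intro u
    obtain ⟨i, h1, h2⟩ := hcover (idxSetoid u) (fun a => (u a).1) (numParts_idx u)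
    refine ⟨i, ?_⟩
    have h2' : LabelEquiv (idxSetoid u) (F i).2 (fun a => (u a).1) := h1 ▸ h2
    rw [h1]
    exact (econd_congr h2' u).mpr (econd_idx u)
  -- a representative of each class
  choose rep hrep using fun i => exists_econd (n := n) (hparts i) (F i).2
  -- `ι` is finite
  haveI : Finite ι := Finite.of_injective rep fun i j hij =>
    huniq i j (rep i) (hrep i) (hij ▸ hrep j)
  haveI : Fintype ι := Fintype.ofFinite ι
  -- the unique transversal index of each `u`
  choose idx hidx using hcov'
  -- entries of linear combinations of the `FFun`s
  have entry_sum : ∀ (s : Finset ι) (c : ι → 𝕜) (v : Fin k → G × Fin n) (w : Fin l → G × Fin n),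
      ((∑ i ∈ s, c i • FFun G 𝕜 n (F i).1 (F i).2) (Finsupp.single v 1)) w
        = if idx (Sum.elim v w) ∈ s then c (idx (Sum.elim v w)) else 0 := by
    intro s c v w
    have step : ((∑ i ∈ s, c i • FFun G 𝕜 n (F i).1 (F i).2) (Finsupp.single v 1)) w
        = ∑ i ∈ s, c i * (if econd n (F i).1 (F i).2 (Sum.elim v w) then (1 : 𝕜) else 0) := by
      rw [LinearMap.sum_apply, Finsupp.finset_sum_apply]
      exact Finset.sum_congr rfl fun i _ => by
        rw [LinearMap.smul_apply, Finsupp.smul_apply, FFun_apply, smul_eq_mul]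
    rw [step]
    by_cases hmem : idx (Sum.elim v w) ∈ s
    · rw [if_pos hmem, Finset.sum_eq_single_of_mem _ hmem (fun j _ hj => by
        rw [if_neg, mul_zero]
        exact fun hcond => hj (huniq j (idx (Sum.elim v w)) _ hcond (hidx (Sum.elim v w))))]
      rw [if_pos (hidx (Sum.elim v w)), mul_one]
    · rw [if_neg hmem]
      refine Finset.sum_eq_zero fun j hjs => ?_
      rw [if_neg, mul_zero]
      intro hcond
      exact hmem ((huniq j (idx (Sum.elim v w)) _ hcond (hidx (Sum.elim v w))) ▸ hjs)
  -- equivariance of the `FFun`s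
  have hFequi : ∀ (P : Setoid (Fin k ⊕ Fin l)) (g : Fin k ⊕ Fin l → G),
      FFun G 𝕜 n P g ∈ equivariantHom G 𝕜 n k l := by
    intro P g
    rw [FFun_eq]
    apply ofEnt_equivariant
    intro γ v w
    refine if_congr ?_ rfl rfl
    rw [exactCond_iff, exactCond_iff, elim_act]
    exact econd_act γ
  -- equivariance of the `Phi`s
  have hPhiequi : ∀ (P : Setoid (Fin k ⊕ Fin l)) (g : Fin k ⊕ Fin l → G),
      Phi G 𝕜 n P g ∈ equivariantHom G 𝕜 n k l := by
    intro P g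
    rw [Phi_eq]
    apply ofEnt_equivariant
    intro γ v w
    refine if_congr ?_ rfl rfl
    rw [phiCond_iff, phiCond_iff, elim_act]
    exact pcond_act γ
  -- expansion of an equivariant map in terms of the `FFun`s
  have expand : ∀ f ∈ equivariantHom G 𝕜 n k l,
      f = ∑ i, (f (Finsupp.single (fun x => rep i (Sum.inl x)) 1) (fun y => rep i (Sum.inr y)))
        • FFun G 𝕜 n (F i).1 (F i).2 := by
    intro f hf
    have hf' : ∀ (γ : Wr G n) (x : (Fin k → G × Fin n) →₀ 𝕜),
        f (dAct G 𝕜 n k γ x) = dAct G 𝕜 n l γ (f x) := hf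
    apply entry_ext
    intro v w
    rw [entry_sum, if_pos (Finset.mem_univ _)]
    obtain ⟨γ, hγ⟩ := exists_act (hrep (idx (Sum.elim v w))) (hidx (Sum.elim v w))
    have hv : v = fun x => actBasis G n γ (rep (idx (Sum.elim v w)) (Sum.inl x)) :=
      funext fun x => (hγ (Sum.inl x)).symm
    have hw : w = fun y => actBasis G n γ (rep (idx (Sum.elim v w)) (Sum.inr y)) :=
      funext fun y => (hγ (Sum.inr y)).symm
    calc f (Finsupp.single v 1) w
        = f (Finsupp.single (fun x => actBasis G n γ (rep (idx (Sum.elim v w)) (Sum.inl x))) 1)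
            (fun y => actBasis G n γ (rep (idx (Sum.elim v w)) (Sum.inr y))) := by
          rw [← hv, ← hw]
      _ = f (dAct G 𝕜 n k γ (Finsupp.single (fun x => rep (idx (Sum.elim v w)) (Sum.inl x)) 1))
            (fun y => actBasis G n γ (rep (idx (Sum.elim v w)) (Sum.inr y))) := by
          rw [dAct_single]
      _ = dAct G 𝕜 n l γ
            (f (Finsupp.single (fun x => rep (idx (Sum.elim v w)) (Sum.inl x)) 1))
            (fun y => actBasis G n γ (rep (idx (Sum.elim v w)) (Sum.inr y))) := by
          rw [hf']
      _ = f (Finsupp.single (fun x => rep (idx (Sum.elim v w)) (Sum.inl x)) 1)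
            (fun y => rep (idx (Sum.elim v w)) (Sum.inr y)) :=
          dAct_apply l γ _ _
  -- the span of the `FFun`s
  have spanF : Submodule.span 𝕜 (Set.range fun i => FFun G 𝕜 n (F i).1 (F i).2)
      = equivariantHom G 𝕜 n k l := by
    apply le_antisymm
    · rw [Submodule.span_le]
      rintro _ ⟨i, rfl⟩
      exact hFequi (F i).1 (F i).2
    · intro f hf
      rw [expand f hf]
      exact Submodule.sum_mem _ fun i _ =>
        Submodule.smul_mem _ _ (Submodule.subset_span ⟨i, rfl⟩)
  -- linear independence
  have lin : LinearIndependent 𝕜 (fun i => FFun G 𝕜 n (F i).1 (F i).2) := by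
    refine (linearIndependent_iff (ι := ι) (R := 𝕜)
      (M := ((Fin k → G × Fin n) →₀ 𝕜) →ₗ[𝕜] ((Fin l → G × Fin n) →₀ 𝕜))
      (v := fun i => FFun G 𝕜 n (F i).1 (F i).2)).mpr fun c hc => ?_
    refine Finsupp.ext fun j => ?_
    rw [Finsupp.zero_apply]
    have helim : Sum.elim (fun x => rep j (Sum.inl x)) (fun y => rep j (Sum.inr y)) = rep j :=
      funext fun a => by cases a <;> rfl
    have h0 : ((Finsupp.linearCombination 𝕜 (fun i => FFun G 𝕜 n (F i).1 (F i).2)) c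
        (Finsupp.single (fun x => rep j (Sum.inl x)) 1)) (fun y => rep j (Sum.inr y)) = 0 := by
      rw [hc]
      simp
    rw [Finsupp.linearCombination_apply] at h0
    have h1 : ((∑ i ∈ c.support, c i • FFun G 𝕜 n (F i).1 (F i).2)
        (Finsupp.single (fun x => rep j (Sum.inl x)) 1)) (fun y => rep j (Sum.inr y)) = 0 := h0
    rw [entry_sum, helim, huniq (idx (rep j)) j (rep j) (hidx (rep j)) (hrep j)] at h1
    by_cases hj : j ∈ c.support
    · rwa [if_pos hj] at h1
    · exact Finsupp.notMem_support_iff.mp hj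
  -- the triangular identity expressing `Phi` in terms of the `FFun`s
  have phi_eq : ∀ (P : Setoid (Fin k ⊕ Fin l)) (g : Fin k ⊕ Fin l → G),
      Phi G 𝕜 n P g = ∑ j, (if compat P g (F j).1 (F j).2 then (1 : 𝕜) else 0)
        • FFun G 𝕜 n (F j).1 (F j).2 := by
    intro P g
    apply entry_ext
    intro v w
    rw [Phi_apply, entry_sum, if_pos (Finset.mem_univ _)]
    by_cases hp : pcond n P g (Sum.elim v w)
    · rw [if_pos hp, if_pos (compat_of_pcond hp (hidx (Sum.elim v w)))]
    · rw [if_neg hp, if_neg]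
      intro hcomp
      exact hp (pcond_of_compat hcomp (hidx (Sum.elim v w)))
  -- each `FFun` over the transversal lies in the span of the `Phi`s
  have ffun_mem : ∀ (m : ℕ) (i : ι), numParts (F i).1 ≤ m →
      FFun G 𝕜 n (F i).1 (F i).2 ∈ Submodule.span 𝕜
        {f | ∃ (P : Setoid (Fin k ⊕ Fin l)) (g : Fin k ⊕ Fin l → G), f = Phi G 𝕜 n P g} := by
    intro m
    induction m using Nat.strong_induction_on with
    | _ m ih =>
      intro i him
      have hkey := phi_eq (F i).1 (F i).2
      rw [← Finset.add_sum_erase _ _ (Finset.mem_univ i),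
        if_pos (compat_self (F i).1 (F i).2), one_smul] at hkey
      have hsub : FFun G 𝕜 n (F i).1 (F i).2
          = Phi G 𝕜 n (F i).1 (F i).2 - ∑ j ∈ Finset.univ.erase i,
              (if compat (F i).1 (F i).2 (F j).1 (F j).2 then (1 : 𝕜) else 0)
                • FFun G 𝕜 n (F j).1 (F j).2 :=
        by rw [hkey]; exact (add_sub_cancel_right (FFun G 𝕜 n (F i).1 (F i).2) _).symm
      rw [hsub]
      have hPhiMem : Phi G 𝕜 n (F i).1 (F i).2 ∈ Submodule.span 𝕜
          {f | ∃ (P : Setoid (Fin k ⊕ Fin l)) (g : Fin k ⊕ Fin l → G), f = Phi G 𝕜 n P g} :=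
        Submodule.subset_span ⟨(F i).1, (F i).2, rfl⟩
      refine Submodule.sub_mem (Submodule.span 𝕜
          {f | ∃ (P : Setoid (Fin k ⊕ Fin l)) (g : Fin k ⊕ Fin l → G), f = Phi G 𝕜 n P g})
        hPhiMem (Submodule.sum_mem _ fun j hj => ?_)
      by_cases hcomp : compat (F i).1 (F i).2 (F j).1 (F j).2
      · rw [if_pos hcomp, one_smul]
        have hne : (F i).1 ≠ (F j).1 := by
          intro hPeq
          exact (Finset.mem_erase.mp hj).1
            (hinj i j hPeq (labelEquiv_of_compat hcomp)).symm
        have hlt : numParts (F j).1 < numParts (F i).1 := numParts_lt hcomp.1 hne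
        exact ih (numParts (F j).1) (lt_of_lt_of_le hlt him) j le_rfl
      · rw [if_neg hcomp, zero_smul]
        exact Submodule.zero_mem _
  -- the span of the `Phi`s
  have spanPhi : Submodule.span 𝕜
      {f | ∃ (P : Setoid (Fin k ⊕ Fin l)) (g : Fin k ⊕ Fin l → G), f = Phi G 𝕜 n P g}
      = equivariantHom G 𝕜 n k l := by
    apply le_antisymm
    · rw [Submodule.span_le]
      rintro f ⟨P, g, rfl⟩
      exact hPhiequi P g
    · rw [← spanF, Submodule.span_le]
      rintro _ ⟨i, rfl⟩
      exact ffun_mem (numParts (F i).1) i le_rfl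
  -- the class-invariance of `FFun`
  have bullet1 : ∀ (P : Setoid (Fin k ⊕ Fin l)) (g h : Fin k ⊕ Fin l → G),
      LabelEquiv P g h → FFun G 𝕜 n P g = FFun G 𝕜 n P h := by
    intro P g h hgh
    apply entry_ext
    intro v w
    rw [FFun_apply, FFun_apply]
    exact if_congr (econd_congr hgh (Sum.elim v w)) rfl rfl
  exact ⟨bullet1, lin, spanF, spanPhi⟩


end GPC
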